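/- Let H₀, H₁, H₂ be Hilbert spaces, A₀ : D(A₀) ⊆ H₀ → H₁ and A₁ : D(A₁) ⊆ H₁ → H₂ densely defined closed operators with range(A₀) ⊆ ker(A₁) (a Hilbert complex). Assume the embedding D(A₁) ∩ D(A₀*) (with combined graph norm) into H₁ is compact. Then ker(A₁)/range-closure splits as ker(A₁) = closure(range A₀) ⊕ (ker A₁ ∩ ker A₀*), the cohomology space ker A₁ ∩ ker A₀* is finite dimensional, and both range A₀ and range A₁ are closed. -/

import Mathlib

open Filter

local notation "⟪" x ", " y "⟫" => @inner ℝ _ _ x y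

section Aux
variable {E F : Type*}
  [NormedAddCommGroup E] [InnerProductSpace ℝ E] [CompleteSpace E]
  [NormedAddCommGroup F] [InnerProductSpace ℝ F] [CompleteSpace F]

/-- Membership in the kernel (pushed to the ambient space) of a partial linear map. -/
lemma mem_kerSet_iff (T : E →ₗ.[ℝ] F) (x : E) :
    x ∈ (LinearMap.ker T.toFun).map T.domain.subtype ↔
      ∃ h : x ∈ T.domain, T ⟨x, h⟩ = 0 := by
  constructor
  · rintro ⟨⟨z, hz⟩, hker, rfl⟩
    exact ⟨hz, hker⟩
  · rintro ⟨h, h0⟩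
    exact ⟨⟨x, h⟩, h0, rfl⟩

/-- The graph of the adjoint of a densely defined operator is closed. -/
lemma adjoint_graph_closed (T : E →ₗ.[ℝ] F) (hT : Dense (T.domain : Set E)) :
    IsClosed (T.adjoint.graph : Set (F × E)) := by
  have hset : (T.adjoint.graph : Set (F × E)) =
      ⋂ x : T.domain, {p : F × E | ⟪p.2, (x : E)⟫ = ⟪p.1, T x⟫} := by
    ext p
    simp only [Set.mem_iInter, Set.mem_setOf_eq, SetLike.mem_coe]
    constructor
    · intro hp x
      rcases T.adjoint.mem_graph_iff.mp hp with ⟨y, hy1, hy2⟩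
      have := (T.adjoint_isFormalAdjoint hT) y x
      rw [hy1, hy2] at this
      exact this
    · intro hp
      have hy : p.1 ∈ T.adjoint.domain :=
        LinearPMap.mem_adjoint_domain_of_exists _ ⟨p.2, fun x => hp x⟩
      have hval : T.adjoint ⟨p.1, hy⟩ = p.2 :=
        LinearPMap.adjoint_apply_eq hT _ fun x => hp x
      rw [LinearPMap.mem_graph_iff]
      exact ⟨⟨p.1, hy⟩, rfl, hval⟩
  rw [hset]
  refine isClosed_iInter fun x => isClosed_eq ?_ ?_
  · exact (continuous_snd.inner continuous_const)
  · exact (continuous_fst.inner continuous_const)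

/-- If the graph is closed, the (ambient) kernel set is closed. -/
lemma kerSet_closed (T : E →ₗ.[ℝ] F) (h : IsClosed (T.graph : Set (E × F))) :
    IsClosed (((LinearMap.ker T.toFun).map T.domain.subtype : Submodule ℝ E) : Set E) := by
  have hset : (((LinearMap.ker T.toFun).map T.domain.subtype : Submodule ℝ E) : Set E)
      = (fun x : E => (x, (0 : F))) ⁻¹' (T.graph : Set (E × F)) := by
    ext x
    simp only [SetLike.mem_coe, Set.mem_preimage, mem_kerSet_iff, LinearPMap.mem_graph_iff]
    constructor
    · rintro ⟨h, h0⟩; exact ⟨⟨x, h⟩, rfl, h0⟩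
    · rintro ⟨⟨z, hz⟩, rfl, h0⟩; exact ⟨hz, h0⟩
  rw [hset]
  exact h.preimage (continuous_id.prodMk continuous_const)

/-- `(range T)ᗮ` is the kernel of the adjoint. -/
lemma orthogonal_range_eq_ker_adjoint (T : E →ₗ.[ℝ] F) (hT : Dense (T.domain : Set E)) :
    (LinearMap.range T.toFun)ᗮ =
      (LinearMap.ker T.adjoint.toFun).map T.adjoint.domain.subtype := by
  ext x
  rw [Submodule.mem_orthogonal, mem_kerSet_iff]
  constructor
  · intro hx
    have h0 : ∀ z : T.domain, ⟪(0 : E), (z : E)⟫ = ⟪x, T z⟫ := by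
      intro z
      rw [inner_zero_left, real_inner_comm]
      exact (hx (T z) (LinearMap.mem_range.mpr ⟨z, rfl⟩)).symm
    have hy : x ∈ T.adjoint.domain :=
      LinearPMap.mem_adjoint_domain_of_exists _ ⟨0, h0⟩
    exact ⟨hy, LinearPMap.adjoint_apply_eq hT _ h0⟩
  · rintro ⟨hx, h0⟩ u hu
    rcases LinearMap.mem_range.mp hu with ⟨z, rfl⟩
    have := (T.adjoint_isFormalAdjoint hT) ⟨x, hx⟩ z
    rw [h0, inner_zero_left] at this
    rw [real_inner_comm]
    exact this.symm

end Aux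
set_option maxHeartbeats 2000000 in
/-- Hilbert complex `A₀ : H₀ → H₁`, `A₁ : H₁ → H₂` (densely defined, closed,
`range A₀ ⊆ ker A₁`). If `D(A₁) ∩ D(A₀*)` with the combined graph norm embeds compactly
into `H₁`, then `ker A₁ = closure (range A₀) ⊕ (ker A₁ ∩ ker A₀*)` orthogonally, the
cohomology space `ker A₁ ∩ ker A₀*` is finite dimensional, and `range A₀`, `range A₁`
are closed. -/
theorem stmt18 {H₀ H₁ H₂ : Type*}
    [NormedAddCommGroup H₀] [InnerProductSpace ℝ H₀] [CompleteSpace H₀]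
    [NormedAddCommGroup H₁] [InnerProductSpace ℝ H₁] [CompleteSpace H₁]
    [NormedAddCommGroup H₂] [InnerProductSpace ℝ H₂] [CompleteSpace H₂]
    (A₀ : H₀ →ₗ.[ℝ] H₁) (A₁ : H₁ →ₗ.[ℝ] H₂)
    (hdense₀ : Dense (A₀.domain : Set H₀)) (hdense₁ : Dense (A₁.domain : Set H₁))
    (hclosed₀ : IsClosed (A₀.graph : Set (H₀ × H₁)))
    (hclosed₁ : IsClosed (A₁.graph : Set (H₁ × H₂)))
    -- complex property : range A₀ ⊆ ker A₁
    (hcomplex : ∀ x : A₀.domain, ∃ h : A₀ x ∈ A₁.domain, A₁ ⟨A₀ x, h⟩ = 0)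
    -- compact embedding of D(A₁) ∩ D(A₀*) (combined graph norm) into H₁
    (hcpt : ∀ (u : ℕ → H₁) (hu₁ : ∀ n, u n ∈ A₁.domain) (hu₀ : ∀ n, u n ∈ A₀.adjoint.domain),
      (∃ C : ℝ, ∀ n, ‖u n‖ ^ 2 + ‖A₁ ⟨u n, hu₁ n⟩‖ ^ 2 + ‖A₀.adjoint ⟨u n, hu₀ n⟩‖ ^ 2 ≤ C) →
      ∃ φ : ℕ → ℕ, StrictMono φ ∧ ∃ y : H₁,
        Tendsto (fun n => u (φ n)) atTop (nhds y)) :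
    (LinearMap.ker A₁.toFun).map A₁.domain.subtype
        = (LinearMap.range A₀.toFun).topologicalClosure
            ⊔ ((LinearMap.ker A₁.toFun).map A₁.domain.subtype
                ⊓ (LinearMap.ker A₀.adjoint.toFun).map A₀.adjoint.domain.subtype) ∧
    ((LinearMap.ker A₁.toFun).map A₁.domain.subtype
        ⊓ (LinearMap.ker A₀.adjoint.toFun).map A₀.adjoint.domain.subtype)
        ≤ (LinearMap.range A₀.toFun)ᗮ ∧
    FiniteDimensional ℝ
      ↥((LinearMap.ker A₁.toFun).map A₁.domain.subtype
          ⊓ (LinearMap.ker A₀.adjoint.toFun).map A₀.adjoint.domain.subtype) ∧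
    IsClosed ((LinearMap.range A₀.toFun : Submodule ℝ H₁) : Set H₁) ∧
    IsClosed ((LinearMap.range A₁.toFun : Submodule ℝ H₂) : Set H₂) := by
  -- notation
  set R₀ : Submodule ℝ H₁ := LinearMap.range A₀.toFun with hR₀def
  set M : Submodule ℝ H₁ := R₀.topologicalClosure with hMdef
  set N₁ : Submodule ℝ H₁ := (LinearMap.ker A₁.toFun).map A₁.domain.subtype with hN₁def
  set Kad : Submodule ℝ H₁ :=
    (LinearMap.ker A₀.adjoint.toFun).map A₀.adjoint.domain.subtype with hKaddef
  -- basic facts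
  have hmemN₁ : ∀ x : H₁, x ∈ N₁ ↔ ∃ h : x ∈ A₁.domain, A₁ ⟨x, h⟩ = 0 :=
    fun x => mem_kerSet_iff A₁ x
  have hmemKad : ∀ x : H₁, x ∈ Kad ↔ ∃ h : x ∈ A₀.adjoint.domain, A₀.adjoint ⟨x, h⟩ = 0 :=
    fun x => mem_kerSet_iff A₀.adjoint x
  have hN₁closed : IsClosed (N₁ : Set H₁) := kerSet_closed A₁ hclosed₁
  have hadjclosed : IsClosed (A₀.adjoint.graph : Set (H₁ × H₀)) :=
    adjoint_graph_closed A₀ hdense₀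
  have hKadclosed : IsClosed (Kad : Set H₁) := kerSet_closed A₀.adjoint hadjclosed
  have horth : R₀ᗮ = Kad := orthogonal_range_eq_ker_adjoint A₀ hdense₀
  have hR₀N₁ : R₀ ≤ N₁ := by
    rintro x hx
    rcases LinearMap.mem_range.mp hx with ⟨z, rfl⟩
    rcases hcomplex z with ⟨h, h0⟩
    exact (hmemN₁ _).mpr ⟨h, h0⟩
  have hMN₁ : M ≤ N₁ := R₀.topologicalClosure_minimal hR₀N₁ hN₁closed
  have hMclosed : IsClosed (M : Set H₁) := R₀.isClosed_topologicalClosure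
  have hMorth : Mᗮ = R₀ᗮ := by
    rw [hMdef, ← R₀.orthogonal_orthogonal_eq_closure, Submodule.triorthogonal_eq_orthogonal]
  haveI : CompleteSpace M := hMclosed.completeSpace_coe
  -- Part 2 : K ≤ R₀ᗮ
  have part2 : N₁ ⊓ Kad ≤ R₀ᗮ := by
    rw [horth]; exact inf_le_right
  -- Part 1 : decomposition
  have part1 : N₁ = M ⊔ (N₁ ⊓ Kad) := by
    refine le_antisymm ?_ (sup_le hMN₁ inf_le_left)
    intro x hx
    have hPx : (M.orthogonalProjectionOnto x : H₁) ∈ M := (M.orthogonalProjectionOnto x).2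
    have hsub : x - M.orthogonalProjectionOnto x ∈ Mᗮ :=
      Submodule.sub_starProjection_mem_orthogonal (K := M) x
    have hsub' : x - M.orthogonalProjectionOnto x ∈ N₁ ⊓ Kad := by
      refine Submodule.mem_inf.mpr ⟨?_, ?_⟩
      · exact N₁.sub_mem hx (hMN₁ hPx)
      · rw [hMorth, horth] at hsub; exact hsub
    have : x = (M.orthogonalProjectionOnto x : H₁) + (x - M.orthogonalProjectionOnto x) := by abel
    rw [this]
    exact Submodule.add_mem_sup hPx hsub'
  -- Part 3 : finite dimensionality
  have part3 : FiniteDimensional ℝ ↥(N₁ ⊓ Kad) := by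
    have hKclosed : IsClosed ((N₁ ⊓ Kad : Submodule ℝ H₁) : Set H₁) := by
      have : ((N₁ ⊓ Kad : Submodule ℝ H₁) : Set H₁) = (N₁ : Set H₁) ∩ (Kad : Set H₁) := rfl
      rw [this]; exact hN₁closed.inter hKadclosed
    refine FiniteDimensional.of_isCompact_closedBall₀ ℝ (r := 1) one_pos ?_
    refine IsSeqCompact.isCompact ?_
    intro u hu
    have hmem : ∀ n, ((u n : H₁)) ∈ N₁ ⊓ Kad := fun n => (u n).2
    have hu₁ : ∀ n, ((u n : H₁)) ∈ A₁.domain :=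
      fun n => ((hmemN₁ _).mp (Submodule.mem_inf.mp (hmem n)).1).choose
    have hu₁0 : ∀ n, A₁ ⟨(u n : H₁), hu₁ n⟩ = 0 :=
      fun n => ((hmemN₁ _).mp (Submodule.mem_inf.mp (hmem n)).1).choose_spec
    have hu₀ : ∀ n, ((u n : H₁)) ∈ A₀.adjoint.domain :=
      fun n => ((hmemKad _).mp (Submodule.mem_inf.mp (hmem n)).2).choose
    have hu₀0 : ∀ n, A₀.adjoint ⟨(u n : H₁), hu₀ n⟩ = 0 :=
      fun n => ((hmemKad _).mp (Submodule.mem_inf.mp (hmem n)).2).choose_spec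
    have hnorm1 : ∀ n, ‖(u n : H₁)‖ ≤ 1 := by
      intro n
      have := mem_closedBall_zero_iff.mp (hu n)
      simpa using this
    obtain ⟨φ, hφ, y, hy⟩ := hcpt (fun n => (u n : H₁)) hu₁ hu₀ ⟨1, by
      intro n
      rw [hu₁0 n, hu₀0 n]
      simp only [norm_zero]
      have h0 := norm_nonneg (u n : H₁)
      nlinarith [hnorm1 n]⟩
    have hymem : y ∈ N₁ ⊓ Kad :=
      hKclosed.mem_of_tendsto hy (Filter.Eventually.of_forall fun n => hmem (φ n))
    refine ⟨⟨y, hymem⟩, ?_, φ, hφ, ?_⟩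
    · rw [Metric.mem_closedBall, dist_zero_right]
      have : ‖(⟨y, hymem⟩ : ↥(N₁ ⊓ Kad))‖ = ‖y‖ := rfl
      rw [this]
      exact le_of_tendsto hy.norm (Filter.Eventually.of_forall fun n => hnorm1 (φ n))
    · exact tendsto_subtype_rng.mpr hy
  -- a priori estimate on M ∩ D(A₀†)
  have estA : ∃ c : ℝ, 0 < c ∧ ∀ v (hv : v ∈ A₀.adjoint.domain), v ∈ M →
      ‖v‖ ≤ c * ‖A₀.adjoint ⟨v, hv⟩‖ := by
    by_contra hcon
    push_neg at hcon
    choose v hv hvM hlt using fun n : ℕ => hcon ((n : ℝ) + 1) (by positivity)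
    have hvpos : ∀ n, 0 < ‖v n‖ := by
      intro n
      have h0 : 0 ≤ ((n : ℝ) + 1) * ‖A₀.adjoint ⟨v n, hv n⟩‖ := by positivity
      linarith [hlt n]
    set u : ℕ → H₁ := fun n => ‖v n‖⁻¹ • v n with hudef
    have huM : ∀ n, u n ∈ M := fun n => M.smul_mem _ (hvM n)
    have hu₀ : ∀ n, u n ∈ A₀.adjoint.domain := fun n => A₀.adjoint.domain.smul_mem _ (hv n)
    have hu₁ : ∀ n, u n ∈ A₁.domain := fun n => ((hmemN₁ _).mp (hMN₁ (huM n))).choose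
    have hu₁0 : ∀ n, A₁ ⟨u n, hu₁ n⟩ = 0 := fun n => ((hmemN₁ _).mp (hMN₁ (huM n))).choose_spec
    have hunorm : ∀ n, ‖u n‖ = 1 := by
      intro n
      rw [hudef]
      simp only [norm_smul, norm_inv, norm_norm]
      exact inv_mul_cancel₀ (ne_of_gt (hvpos n))
    have huvalnorm : ∀ n, ‖A₀.adjoint ⟨u n, hu₀ n⟩‖ ≤ 1 / ((n : ℝ) + 1) := by
      intro n
      have hval : A₀.adjoint ⟨u n, hu₀ n⟩ = ‖v n‖⁻¹ • A₀.adjoint ⟨v n, hv n⟩ := by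
        have h5 : (⟨u n, hu₀ n⟩ : A₀.adjoint.domain)
            = ‖v n‖⁻¹ • (⟨v n, hv n⟩ : A₀.adjoint.domain) := rfl
        rw [h5, A₀.adjoint.map_smul]
      have h1 : (0:ℝ) < (n : ℝ) + 1 := by positivity
      have h2 : ‖A₀.adjoint ⟨v n, hv n⟩‖ < ‖v n‖ / ((n : ℝ) + 1) :=
        (lt_div_iff₀' h1).mpr (hlt n)
      rw [hval, norm_smul, norm_inv, norm_norm]
      refine le_of_lt ?_
      calc ‖v n‖⁻¹ * ‖A₀.adjoint ⟨v n, hv n⟩‖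
          < ‖v n‖⁻¹ * (‖v n‖ / ((n : ℝ) + 1)) :=
            mul_lt_mul_of_pos_left h2 (inv_pos.mpr (hvpos n))
        _ = 1 / ((n : ℝ) + 1) := by
            rw [div_eq_mul_inv, ← mul_assoc, inv_mul_cancel₀ (ne_of_gt (hvpos n)), one_mul,
              one_div]
    obtain ⟨φ, hφ, w, hw⟩ := hcpt u hu₁ hu₀ ⟨2, by
      intro n
      rw [hu₁0 n, hunorm n]
      simp only [norm_zero]
      have h3 := huvalnorm n
      have h4 := norm_nonneg (A₀.adjoint ⟨u n, hu₀ n⟩)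
      have h1 : (0:ℝ) < (n : ℝ) + 1 := by positivity
      have h5 : 1 / ((n : ℝ) + 1) ≤ 1 := by
        rw [div_le_one h1]; linarith
      nlinarith⟩
    have hwnorm : ‖w‖ = 1 := by
      have h1 : Tendsto (fun n => ‖u (φ n)‖) atTop (nhds ‖w‖) := hw.norm
      have h2 : (fun n => ‖u (φ n)‖) = fun _ => (1:ℝ) := funext fun n => hunorm (φ n)
      rw [h2] at h1
      exact (tendsto_nhds_unique h1 tendsto_const_nhds)
    have hwM : w ∈ M :=
      hMclosed.mem_of_tendsto hw (Filter.Eventually.of_forall fun n => huM (φ n))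
    have hAd0 : Tendsto (fun n => A₀.adjoint ⟨u (φ n), hu₀ (φ n)⟩) atTop (nhds 0) := by
      refine squeeze_zero_norm (fun n => le_trans (huvalnorm (φ n)) ?_)
        tendsto_one_div_add_atTop_nhds_zero_nat
      have h6 : (n : ℝ) + 1 ≤ (φ n : ℝ) + 1 := by
        have h7 : n ≤ φ n := hφ.le_apply
        have h8 : (n : ℝ) ≤ (φ n : ℝ) := by exact_mod_cast h7
        linarith
      exact one_div_le_one_div_of_le (by positivity) h6
    have hgraph : (w, (0 : H₀)) ∈ A₀.adjoint.graph := by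
      have hmemg : ∀ n, ((u (φ n) : H₁), A₀.adjoint ⟨u (φ n), hu₀ (φ n)⟩)
          ∈ (A₀.adjoint.graph : Set (H₁ × H₀)) := by
        intro n
        exact A₀.adjoint.mem_graph_iff.mpr ⟨⟨u (φ n), hu₀ (φ n)⟩, rfl, rfl⟩
      exact hadjclosed.mem_of_tendsto (hw.prodMk_nhds hAd0)
        (Filter.Eventually.of_forall hmemg)
    have hwKad : w ∈ Kad := by
      rcases A₀.adjoint.mem_graph_iff.mp hgraph with ⟨z, hz1, hz2⟩
      have hz1' : (z : H₁) = w := hz1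
      have hwdom : w ∈ A₀.adjoint.domain := hz1' ▸ z.2
      refine (hmemKad w).mpr ⟨hwdom, ?_⟩
      have h9 : (⟨w, hwdom⟩ : A₀.adjoint.domain) = z := by
        ext; exact hz1'.symm
      rw [h9, hz2]
    have : w = 0 := by
      have hperp : w ∈ Mᗮ := by rw [hMorth, horth]; exact hwKad
      have := (Submodule.mem_orthogonal _ w).mp hperp w hwM
      exact inner_self_eq_zero.mp this
    rw [this, norm_zero] at hwnorm
    exact zero_ne_one hwnorm
  have hN₁orthKad : N₁ᗮ ≤ Kad := by
    intro x hx
    rw [← horth, ← hMorth]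
    exact Submodule.orthogonal_le hMN₁ hx
  have estB : ∃ c : ℝ, 0 < c ∧ ∀ v (hv : v ∈ A₁.domain), v ∈ N₁ᗮ →
      ‖v‖ ≤ c * ‖A₁ ⟨v, hv⟩‖ := by
    by_contra hcon
    push_neg at hcon
    choose v hv hvO hlt using fun n : ℕ => hcon ((n : ℝ) + 1) (by positivity)
    have hvpos : ∀ n, 0 < ‖v n‖ := by
      intro n
      have h0 : 0 ≤ ((n : ℝ) + 1) * ‖A₁ ⟨v n, hv n⟩‖ := by positivity
      linarith [hlt n]
    set u : ℕ → H₁ := fun n => ‖v n‖⁻¹ • v n with hudef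
    have huO : ∀ n, u n ∈ N₁ᗮ := fun n => N₁ᗮ.smul_mem _ (hvO n)
    have hu₁ : ∀ n, u n ∈ A₁.domain := fun n => A₁.domain.smul_mem _ (hv n)
    have hu₀ : ∀ n, u n ∈ A₀.adjoint.domain :=
      fun n => ((hmemKad _).mp (hN₁orthKad (huO n))).choose
    have hu₀0 : ∀ n, A₀.adjoint ⟨u n, hu₀ n⟩ = 0 :=
      fun n => ((hmemKad _).mp (hN₁orthKad (huO n))).choose_spec
    have hunorm : ∀ n, ‖u n‖ = 1 := by
      intro n
      rw [hudef]
      simp only [norm_smul, norm_inv, norm_norm]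
      exact inv_mul_cancel₀ (ne_of_gt (hvpos n))
    have huvalnorm : ∀ n, ‖A₁ ⟨u n, hu₁ n⟩‖ ≤ 1 / ((n : ℝ) + 1) := by
      intro n
      have hval : A₁ ⟨u n, hu₁ n⟩ = ‖v n‖⁻¹ • A₁ ⟨v n, hv n⟩ := by
        have h5 : (⟨u n, hu₁ n⟩ : A₁.domain)
            = ‖v n‖⁻¹ • (⟨v n, hv n⟩ : A₁.domain) := rfl
        rw [h5, A₁.map_smul]
      have h1 : (0:ℝ) < (n : ℝ) + 1 := by positivity
      have h2 : ‖A₁ ⟨v n, hv n⟩‖ < ‖v n‖ / ((n : ℝ) + 1) :=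
        (lt_div_iff₀' h1).mpr (hlt n)
      rw [hval, norm_smul, norm_inv, norm_norm]
      refine le_of_lt ?_
      calc ‖v n‖⁻¹ * ‖A₁ ⟨v n, hv n⟩‖
          < ‖v n‖⁻¹ * (‖v n‖ / ((n : ℝ) + 1)) :=
            mul_lt_mul_of_pos_left h2 (inv_pos.mpr (hvpos n))
        _ = 1 / ((n : ℝ) + 1) := by
            rw [div_eq_mul_inv, ← mul_assoc, inv_mul_cancel₀ (ne_of_gt (hvpos n)), one_mul,
              one_div]
    obtain ⟨φ, hφ, w, hw⟩ := hcpt u hu₁ hu₀ ⟨2, by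
      intro n
      rw [hu₀0 n, hunorm n]
      simp only [norm_zero]
      have h3 := huvalnorm n
      have h4 := norm_nonneg (A₁ ⟨u n, hu₁ n⟩)
      have h1 : (0:ℝ) < (n : ℝ) + 1 := by positivity
      have h5 : 1 / ((n : ℝ) + 1) ≤ 1 := by
        rw [div_le_one h1]; linarith
      nlinarith⟩
    have hwnorm : ‖w‖ = 1 := by
      have h1 : Tendsto (fun n => ‖u (φ n)‖) atTop (nhds ‖w‖) := hw.norm
      have h2 : (fun n => ‖u (φ n)‖) = fun _ => (1:ℝ) := funext fun n => hunorm (φ n)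
      rw [h2] at h1
      exact (tendsto_nhds_unique h1 tendsto_const_nhds)
    have hwO : w ∈ N₁ᗮ :=
      N₁.isClosed_orthogonal.mem_of_tendsto hw (Filter.Eventually.of_forall fun n => huO (φ n))
    have hA0 : Tendsto (fun n => A₁ ⟨u (φ n), hu₁ (φ n)⟩) atTop (nhds 0) := by
      refine squeeze_zero_norm (fun n => le_trans (huvalnorm (φ n)) ?_)
        tendsto_one_div_add_atTop_nhds_zero_nat
      have h6 : (n : ℝ) + 1 ≤ (φ n : ℝ) + 1 := by
        have h7 : n ≤ φ n := hφ.le_apply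
        have h8 : (n : ℝ) ≤ (φ n : ℝ) := by exact_mod_cast h7
        linarith
      exact one_div_le_one_div_of_le (by positivity) h6
    have hgraph : (w, (0 : H₂)) ∈ A₁.graph := by
      have hmemg : ∀ n, ((u (φ n) : H₁), A₁ ⟨u (φ n), hu₁ (φ n)⟩)
          ∈ (A₁.graph : Set (H₁ × H₂)) := by
        intro n
        exact A₁.mem_graph_iff.mpr ⟨⟨u (φ n), hu₁ (φ n)⟩, rfl, rfl⟩
      exact hclosed₁.mem_of_tendsto (hw.prodMk_nhds hA0)
        (Filter.Eventually.of_forall hmemg)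
    have hwN₁ : w ∈ N₁ := by
      rcases A₁.mem_graph_iff.mp hgraph with ⟨z, hz1, hz2⟩
      have hz1' : (z : H₁) = w := hz1
      have hwdom : w ∈ A₁.domain := hz1' ▸ z.2
      refine (hmemN₁ w).mpr ⟨hwdom, ?_⟩
      have h9 : (⟨w, hwdom⟩ : A₁.domain) = z := by
        ext; exact hz1'.symm
      rw [h9, hz2]
    have : w = 0 := by
      have := (Submodule.mem_orthogonal _ w).mp hwO w hwN₁
      exact inner_self_eq_zero.mp this
    rw [this, norm_zero] at hwnorm
    exact zero_ne_one hwnorm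
  -- Part 4 : range A₀ closed
  have part4 : IsClosed (R₀ : Set H₁) := by
    obtain ⟨c, hc, hest⟩ := estA
    have huniq : ∀ (x₁ x₂ : H₁) (h₁ : x₁ ∈ A₀.adjoint.domain) (h₂ : x₂ ∈ A₀.adjoint.domain),
        x₁ ∈ M → x₂ ∈ M → A₀.adjoint ⟨x₁, h₁⟩ = A₀.adjoint ⟨x₂, h₂⟩ → x₁ = x₂ := by
      intro x₁ x₂ h₁ h₂ hM₁ hM₂ heq
      have hsub : x₁ - x₂ ∈ A₀.adjoint.domain := A₀.adjoint.domain.sub_mem h₁ h₂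
      have hsubM : x₁ - x₂ ∈ M := M.sub_mem hM₁ hM₂
      have hval : A₀.adjoint ⟨x₁ - x₂, hsub⟩ = 0 := by
        have h6 : (⟨x₁ - x₂, hsub⟩ : A₀.adjoint.domain) = ⟨x₁, h₁⟩ - ⟨x₂, h₂⟩ := rfl
        rw [h6, A₀.adjoint.map_sub, heq, sub_self]
      have h7 := hest _ hsub hsubM
      rw [hval, norm_zero, mul_zero] at h7
      have h8 : ‖x₁ - x₂‖ = 0 := le_antisymm h7 (norm_nonneg _)
      exact sub_eq_zero.mp (norm_eq_zero.mp h8)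
    set S : Submodule ℝ H₀ :=
      (Submodule.comap A₀.adjoint.domain.subtype M).map A₀.adjoint.toFun with hSdef
    have hmemS : ∀ w : H₀, w ∈ S ↔ ∃ (x : H₁) (hx : x ∈ A₀.adjoint.domain),
        x ∈ M ∧ A₀.adjoint ⟨x, hx⟩ = w := by
      intro w
      constructor
      · rintro ⟨⟨x, hx⟩, hxM, rfl⟩
        exact ⟨x, hx, hxM, rfl⟩
      · rintro ⟨x, hx, hxM, rfl⟩
        exact ⟨⟨x, hx⟩, hxM, rfl⟩
    have hSclosed : IsClosed (S : Set H₀) := by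
      refine IsSeqClosed.isClosed ?_
      intro ws w hws hwlim
      choose xs hxs hxsM hxsval using fun n => (hmemS (ws n)).mp (hws n)
      have hcauchy : CauchySeq xs := by
        rw [Metric.cauchySeq_iff]
        intro ε hε
        have hyc : CauchySeq ws := hwlim.cauchySeq
        rw [Metric.cauchySeq_iff] at hyc
        obtain ⟨N, hN⟩ := hyc (ε / c) (by positivity)
        refine ⟨N, fun m hm n hn => ?_⟩
        have h1 : xs m - xs n ∈ M := M.sub_mem (hxsM m) (hxsM n)
        have h2 : xs m - xs n ∈ A₀.adjoint.domain :=
          A₀.adjoint.domain.sub_mem (hxs m) (hxs n)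
        have h3 : A₀.adjoint ⟨xs m - xs n, h2⟩ = ws m - ws n := by
          have h6 : (⟨xs m - xs n, h2⟩ : A₀.adjoint.domain)
              = ⟨xs m, hxs m⟩ - ⟨xs n, hxs n⟩ := rfl
          rw [h6, A₀.adjoint.map_sub, hxsval, hxsval]
        have h4 := hest _ h2 h1
        rw [h3] at h4
        have h5 := hN m hm n hn
        rw [dist_eq_norm] at h5 ⊢
        calc ‖xs m - xs n‖ ≤ c * ‖ws m - ws n‖ := h4
          _ < c * (ε / c) := by exact mul_lt_mul_of_pos_left h5 hc
          _ = ε := by field_simp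
      obtain ⟨l, hl⟩ := cauchySeq_tendsto_of_complete hcauchy
      have hlM : l ∈ M := hMclosed.mem_of_tendsto hl (Filter.Eventually.of_forall hxsM)
      have hgraph : (l, w) ∈ A₀.adjoint.graph := by
        have hmemg : ∀ n, (xs n, ws n) ∈ (A₀.adjoint.graph : Set (H₁ × H₀)) := fun n =>
          A₀.adjoint.mem_graph_iff.mpr ⟨⟨xs n, hxs n⟩, rfl, hxsval n⟩
        exact hadjclosed.mem_of_tendsto (hl.prodMk_nhds hwlim)
          (Filter.Eventually.of_forall hmemg)
      rcases A₀.adjoint.mem_graph_iff.mp hgraph with ⟨z, hz1, hz2⟩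
      have hz1' : (z : H₁) = l := hz1
      have hldom : l ∈ A₀.adjoint.domain := hz1' ▸ z.2
      have h9 : (⟨l, hldom⟩ : A₀.adjoint.domain) = z := by ext; exact hz1'.symm
      exact (hmemS w).mpr ⟨l, hldom, hlM, by rw [h9]; exact hz2⟩
    haveI : CompleteSpace S := hSclosed.completeSpace_coe
    refine isClosed_of_closure_subset ?_
    intro y hy
    have hyM : y ∈ M := by
      have h1 : (M : Set H₁) = closure (R₀ : Set H₁) := R₀.topologicalClosure_coe
      have h2 : y ∈ (M : Set H₁) := h1 ▸ hy
      exact h2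
    choose g hgdom hgM hgval using fun w : S => (hmemS w).mp w.2
    have hgadd : ∀ w₁ w₂ : S, g (w₁ + w₂) = g w₁ + g w₂ := by
      intro w₁ w₂
      have hd : g w₁ + g w₂ ∈ A₀.adjoint.domain :=
        A₀.adjoint.domain.add_mem (hgdom w₁) (hgdom w₂)
      refine huniq _ _ (hgdom _) hd (hgM _) (M.add_mem (hgM w₁) (hgM w₂)) ?_
      rw [hgval]
      have h6 : (⟨g w₁ + g w₂, hd⟩ : A₀.adjoint.domain)
          = ⟨g w₁, hgdom w₁⟩ + ⟨g w₂, hgdom w₂⟩ := rfl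
      rw [h6, A₀.adjoint.map_add, hgval, hgval]
      rfl
    have hgsmul : ∀ (a : ℝ) (w : S), g (a • w) = a • g w := by
      intro a w
      have hd : a • g w ∈ A₀.adjoint.domain := A₀.adjoint.domain.smul_mem _ (hgdom w)
      refine huniq _ _ (hgdom _) hd (hgM _) (M.smul_mem _ (hgM w)) ?_
      rw [hgval]
      have h6 : (⟨a • g w, hd⟩ : A₀.adjoint.domain) = a • (⟨g w, hgdom w⟩ : A₀.adjoint.domain) :=
        rfl
      rw [h6, A₀.adjoint.map_smul, hgval]
      rfl
    set f : S →ₗ[ℝ] ℝ :=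
      { toFun := fun w => @inner ℝ _ _ y (g w)
        map_add' := fun w₁ w₂ => by
          show (@inner ℝ _ _ y (g (w₁ + w₂)) : ℝ) = @inner ℝ _ _ y (g w₁) + @inner ℝ _ _ y (g w₂)
          rw [hgadd, inner_add_right]
        map_smul' := fun a w => by
          show (@inner ℝ _ _ y (g (a • w)) : ℝ) = a * @inner ℝ _ _ y (g w)
          rw [hgsmul, real_inner_smul_right] } with hfdef
    have hfbound : ∀ w : S, ‖f w‖ ≤ (c * ‖y‖) * ‖w‖ := by
      intro w
      have h1 : ‖g w‖ ≤ c * ‖(w : H₀)‖ := by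
        have h2 := hest _ (hgdom w) (hgM w)
        rw [hgval] at h2
        exact h2
      have h3 : ‖f w‖ ≤ ‖y‖ * ‖g w‖ := by
        rw [hfdef]
        exact abs_real_inner_le_norm y (g w)
      have h4 : ‖(w : H₀)‖ = ‖w‖ := rfl
      rw [h4] at h1
      calc ‖f w‖ ≤ ‖y‖ * ‖g w‖ := h3
        _ ≤ ‖y‖ * (c * ‖w‖) := by
            exact mul_le_mul_of_nonneg_left h1 (norm_nonneg y)
        _ = (c * ‖y‖) * ‖w‖ := by ring
    set F : S →L[ℝ] ℝ := f.mkContinuous (c * ‖y‖) hfbound with hFdef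
    set u₀ : S := (InnerProductSpace.toDual ℝ S).symm F with hu₀def
    have hkey1 : ∀ (x : H₁) (hx : x ∈ A₀.adjoint.domain), x ∈ M →
        @inner ℝ _ _ ((u₀ : H₀)) (A₀.adjoint ⟨x, hx⟩) = @inner ℝ _ _ y x := by
      intro x hx hxM
      have hmem : A₀.adjoint ⟨x, hx⟩ ∈ S := (hmemS _).mpr ⟨x, hx, hxM, rfl⟩
      have h1 : @inner ℝ _ _ u₀ (⟨A₀.adjoint ⟨x, hx⟩, hmem⟩ : S)
          = F ⟨A₀.adjoint ⟨x, hx⟩, hmem⟩ := by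
        rw [hu₀def]
        exact InnerProductSpace.toDual_symm_apply
      have h2 : g ⟨A₀.adjoint ⟨x, hx⟩, hmem⟩ = x :=
        huniq _ _ (hgdom _) hx (hgM _) hxM (by rw [hgval])
      have h3 : F ⟨A₀.adjoint ⟨x, hx⟩, hmem⟩ = @inner ℝ _ _ y x := by
        rw [hFdef]
        show f ⟨A₀.adjoint ⟨x, hx⟩, hmem⟩ = _
        rw [hfdef]
        show @inner ℝ _ _ y (g ⟨A₀.adjoint ⟨x, hx⟩, hmem⟩) = _
        rw [h2]
      rw [← h3, ← h1]
      rfl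
    have hkey2 : ∀ (z : H₁) (hz : z ∈ A₀.adjoint.domain),
        @inner ℝ _ _ ((u₀ : H₀)) (A₀.adjoint ⟨z, hz⟩) = @inner ℝ _ _ y z := by
      intro z hz
      set q : H₁ := z - M.orthogonalProjectionOnto z with hqdef
      have hqM : q ∈ Mᗮ := Submodule.sub_starProjection_mem_orthogonal (K := M) z
      have hqKad : q ∈ Kad := by rw [← horth, ← hMorth]; exact hqM
      obtain ⟨hqdom, hq0⟩ := (hmemKad q).mp hqKad
      have hPeq : (M.orthogonalProjectionOnto z : H₁) = z - q := by rw [hqdef]; abel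
      have hPdom : (M.orthogonalProjectionOnto z : H₁) ∈ A₀.adjoint.domain := by
        rw [hPeq]; exact A₀.adjoint.domain.sub_mem hz hqdom
      have hPval : A₀.adjoint ⟨(M.orthogonalProjectionOnto z : H₁), hPdom⟩
          = A₀.adjoint ⟨z, hz⟩ := by
        have h6 : (⟨(M.orthogonalProjectionOnto z : H₁), hPdom⟩ : A₀.adjoint.domain)
            = ⟨z, hz⟩ - ⟨q, hqdom⟩ := by ext; exact hPeq
        rw [h6, A₀.adjoint.map_sub, hq0, sub_zero]
      have hyq : @inner ℝ _ _ y q = 0 := (Submodule.mem_orthogonal _ q).mp hqM y hyM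
      rw [← hPval, hkey1 _ hPdom (M.orthogonalProjectionOnto z).2, hPeq, inner_sub_right, hyq,
        sub_zero]
    -- transfer to `WithLp 2` to use orthogonality in the product space
    set G : Submodule ℝ (WithLp 2 (H₀ × H₁)) :=
      A₀.graph.comap (WithLp.linearEquiv 2 ℝ (H₀ × H₁)).toLinearMap with hGdef
    have hGclosed : IsClosed (G : Set (WithLp 2 (H₀ × H₁))) := by
      have hcont : Continuous ⇑((WithLp.linearEquiv 2 ℝ (H₀ × H₁)).toLinearMap) :=
        (WithLp.prodContinuousLinearEquiv 2 ℝ H₀ H₁).continuous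
      exact hclosed₀.preimage hcont
    haveI : CompleteSpace G := hGclosed.completeSpace_coe
    have hGoo : Gᗮᗮ = G := G.orthogonal_orthogonal
    set p : WithLp 2 (H₀ × H₁) :=
      (WithLp.linearEquiv 2 ℝ (H₀ × H₁)).symm ((u₀ : H₀), y) with hpdef
    have hp : p ∈ Gᗮᗮ := by
      rw [Submodule.mem_orthogonal]
      intro q hq
      rw [Submodule.mem_orthogonal] at hq
      have hqchar : ∀ x : A₀.domain,
          @inner ℝ _ _ ((x : H₀)) q.fst + @inner ℝ _ _ (A₀ x) q.snd = 0 := by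
        intro x
        have hxg : (WithLp.linearEquiv 2 ℝ (H₀ × H₁)).symm ((x : H₀), A₀ x) ∈ G := by
          rw [hGdef, Submodule.mem_comap]
          have h6 : (WithLp.linearEquiv 2 ℝ (H₀ × H₁)).toLinearMap
              ((WithLp.linearEquiv 2 ℝ (H₀ × H₁)).symm ((x : H₀), A₀ x)) = ((x : H₀), A₀ x) :=
            (WithLp.linearEquiv 2 ℝ (H₀ × H₁)).apply_symm_apply _
          rw [h6]
          exact A₀.mem_graph x
        have h7 := hq _ hxg
        rw [WithLp.prod_inner_apply] at h7
        have h8 : ((WithLp.linearEquiv 2 ℝ (H₀ × H₁)).symm ((x : H₀), A₀ x)).fst = (x : H₀) :=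
          rfl
        have h9 : ((WithLp.linearEquiv 2 ℝ (H₀ × H₁)).symm ((x : H₀), A₀ x)).snd = A₀ x :=
          rfl
        exact h7
      have hmem : -q.snd ∈ A₀.adjoint.domain := by
        refine LinearPMap.mem_adjoint_domain_of_exists _ ⟨q.fst, fun x => ?_⟩
        have h7 := hqchar x
        have h8 : @inner ℝ _ _ q.fst ((x : H₀)) = @inner ℝ _ _ ((x : H₀)) q.fst :=
          real_inner_comm _ _
        have h9 : @inner ℝ _ _ (-q.snd) (A₀ x) = - @inner ℝ _ _ (A₀ x) q.snd := by
          rw [inner_neg_left, real_inner_comm]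
        rw [h8, h9]
        linarith
      have hval : A₀.adjoint ⟨-q.snd, hmem⟩ = q.fst := by
        refine LinearPMap.adjoint_apply_eq hdense₀ _ fun x => ?_
        have h7 := hqchar x
        have h8 : @inner ℝ _ _ q.fst ((x : H₀)) = @inner ℝ _ _ ((x : H₀)) q.fst :=
          real_inner_comm _ _
        have h9 : @inner ℝ _ _ (-q.snd) (A₀ x) = - @inner ℝ _ _ (A₀ x) q.snd := by
          rw [inner_neg_left, real_inner_comm]
        rw [h8, h9]
        linarith
      have hkey := hkey2 (-q.snd) hmem
      rw [hval] at hkey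
      rw [WithLp.prod_inner_apply]
      have hpf : p.fst = (u₀ : H₀) := rfl
      have hps : p.snd = y := rfl
      change @inner ℝ _ _ q.fst ((u₀ : H₀)) + @inner ℝ _ _ q.snd y = 0
      have h10 : @inner ℝ _ _ q.fst ((u₀ : H₀)) = @inner ℝ _ _ ((u₀ : H₀)) q.fst :=
        real_inner_comm _ _
      have h11 : @inner ℝ _ _ y (-q.snd) = - @inner ℝ _ _ q.snd y := by
        rw [inner_neg_right, real_inner_comm]
      rw [h10, hkey, h11]
      ring
    rw [hGoo] at hp
    have hup : ((u₀ : H₀), y) ∈ A₀.graph := by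
      rw [hGdef, Submodule.mem_comap] at hp
      have h6 : (WithLp.linearEquiv 2 ℝ (H₀ × H₁)).toLinearMap p = ((u₀ : H₀), y) := by
        rw [hpdef]
        exact (WithLp.linearEquiv 2 ℝ (H₀ × H₁)).apply_symm_apply _
      rw [h6] at hp
      exact hp
    rcases A₀.mem_graph_iff.mp hup with ⟨z, hz1, hz2⟩
    exact LinearMap.mem_range.mpr ⟨z, hz2⟩
  have part5 : IsClosed ((LinearMap.range A₁.toFun : Submodule ℝ H₂) : Set H₂) := by
    obtain ⟨c, hc, hest⟩ := estB
    haveI : CompleteSpace N₁ := hN₁closed.completeSpace_coe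
    refine isClosed_of_closure_subset ?_
    intro y hy
    obtain ⟨ys, hys, hlim⟩ := mem_closure_iff_seq_limit.mp hy
    choose x hx using fun n => LinearMap.mem_range.mp (hys n)
    set v : ℕ → H₁ := fun n => (x n : H₁) - N₁.orthogonalProjectionOnto (x n) with hvdef
    have hPdom : ∀ n, ((N₁.orthogonalProjectionOnto ((x n : H₁)) : H₁)) ∈ A₁.domain :=
      fun n => ((hmemN₁ _).mp (N₁.orthogonalProjectionOnto ((x n : H₁))).2).choose
    have hP0 : ∀ n, A₁ ⟨(N₁.orthogonalProjectionOnto ((x n : H₁)) : H₁), hPdom n⟩ = 0 :=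
      fun n => ((hmemN₁ _).mp (N₁.orthogonalProjectionOnto ((x n : H₁))).2).choose_spec
    have hvdom : ∀ n, v n ∈ A₁.domain := fun n => A₁.domain.sub_mem (x n).2 (hPdom n)
    have hvval : ∀ n, A₁ ⟨v n, hvdom n⟩ = ys n := by
      intro n
      have hsplit : (⟨v n, hvdom n⟩ : A₁.domain)
          = x n - ⟨(N₁.orthogonalProjectionOnto ((x n : H₁)) : H₁), hPdom n⟩ := rfl
      rw [hsplit, A₁.map_sub, hP0, sub_zero]
      exact hx n
    have hvorth : ∀ n, v n ∈ N₁ᗮ := fun n => Submodule.sub_starProjection_mem_orthogonal (K := N₁) _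
    have hcauchy : CauchySeq v := by
      rw [Metric.cauchySeq_iff]
      intro ε hε
      have hyc : CauchySeq ys := hlim.cauchySeq
      rw [Metric.cauchySeq_iff] at hyc
      obtain ⟨N, hN⟩ := hyc (ε / c) (by positivity)
      refine ⟨N, fun m hm n hn => ?_⟩
      have h1 : v m - v n ∈ N₁ᗮ := N₁ᗮ.sub_mem (hvorth m) (hvorth n)
      have h2 : v m - v n ∈ A₁.domain := A₁.domain.sub_mem (hvdom m) (hvdom n)
      have h3 : A₁ ⟨v m - v n, h2⟩ = ys m - ys n := by
        have h6 : (⟨v m - v n, h2⟩ : A₁.domain) = ⟨v m, hvdom m⟩ - ⟨v n, hvdom n⟩ := rfl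
        rw [h6, A₁.map_sub, hvval, hvval]
      have h4 := hest _ h2 h1
      rw [h3] at h4
      have h5 := hN m hm n hn
      rw [dist_eq_norm] at h5 ⊢
      calc ‖v m - v n‖ ≤ c * ‖ys m - ys n‖ := h4
        _ < c * (ε / c) := by exact mul_lt_mul_of_pos_left h5 hc
        _ = ε := by field_simp
    obtain ⟨l, hl⟩ := cauchySeq_tendsto_of_complete hcauchy
    have hgraph : (l, y) ∈ A₁.graph := by
      have hmemg : ∀ n, (v n, ys n) ∈ (A₁.graph : Set (H₁ × H₂)) := fun n =>
        A₁.mem_graph_iff.mpr ⟨⟨v n, hvdom n⟩, rfl, hvval n⟩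
      exact hclosed₁.mem_of_tendsto (hl.prodMk_nhds hlim) (Filter.Eventually.of_forall hmemg)
    rcases A₁.mem_graph_iff.mp hgraph with ⟨z, hz1, hz2⟩
    exact LinearMap.mem_range.mpr ⟨z, hz2⟩
  exact ⟨part1, part2, part3, part4, part5⟩
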